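/- For integers 0 ≤ i ≤ d, the quantities p(i,d) := (i+1)! · C(d,i) · (1/(d+1))^(i+1) form a probability distribution: the sum over i from 0 to d of (i+1)!·C(d,i)·(1/(d+1))^(i+1) equals 1. -/

import Mathlib

theorem stmt0 (d : ℕ) :
    ∑ i ∈ Finset.range (d + 1),
      (Nat.factorial (i + 1) : ℝ) * (d.choose i : ℝ) * (1 / ((d : ℝ) + 1)) ^ (i + 1) = 1 := by
  have hd : ((d : ℝ) + 1) ≠ 0 := by positivity
  have key : ∀ i ∈ Finset.range (d + 1),
      (Nat.factorial (i + 1) : ℝ) * (d.choose i : ℝ) * (1 / ((d : ℝ) + 1)) ^ (i + 1)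
      = (d.descFactorial i : ℝ) / ((d : ℝ) + 1) ^ i
        - (d.descFactorial (i + 1) : ℝ) / ((d : ℝ) + 1) ^ (i + 1) := by
    intro i hi
    rw [Finset.mem_range] at hi
    have hi' : i ≤ d := Nat.lt_succ_iff.mp hi
    have h1 : (d.descFactorial i : ℝ) = (Nat.factorial i : ℝ) * (d.choose i : ℝ) := by
      rw [Nat.descFactorial_eq_factorial_mul_choose]; push_cast; ring
    have h2 : (d.descFactorial (i + 1) : ℝ) = ((d : ℝ) - i) * (d.descFactorial i : ℝ) := by
      rw [Nat.descFactorial_succ]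
      rw [Nat.cast_mul, Nat.cast_sub hi']
    have h3 : (Nat.factorial (i + 1) : ℝ) = ((i : ℝ) + 1) * (Nat.factorial i : ℝ) := by
      rw [Nat.factorial_succ]; push_cast; ring
    rw [h2, h1, h3]
    rw [div_pow, one_pow]
    field_simp
    ring
  rw [Finset.sum_congr rfl key, Finset.sum_range_sub']
  simp [Nat.descFactorial_eq_zero_iff_lt.mpr (Nat.lt_succ_self d)]
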